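/- arXiv:2503.16341 — 3 statements merged into one kernel-verified Lean document; each statement's English description precedes it below -/
import Mathlib

section
/- Let H and K be finite-dimensional complex Hilbert spaces with dim(H) ≥ 2 and dim(K) < 2·dim(H). Then every additive mapping A : H → K preserving Euclidean orthogonality is complex-linear or conjugate-linear. -/
open scoped ComplexInnerProductSpace
open Module

private lemma inner_self_c {K : Type*} [NormedAddCommGroup K] [InnerProductSpace ℂ K] (z : K) :
    ⟪z, z⟫ = ((‖z‖^2 : ℝ) : ℂ) := by
  rw [inner_self_eq_norm_sq_to_K]; norm_cast

section AOP
variable {H K : Type*} [NormedAddCommGroup H] [InnerProductSpace ℂ H]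
    [NormedAddCommGroup K] [InnerProductSpace ℂ K]
    {A : H → K}

private lemma ratSmul (hadd : ∀ x y, A (x + y) = A x + A y) (q : ℚ) (z : H) :
    A ((q : ℂ) • z) = (q : ℂ) • A z := by
  set A' : H →+ K := AddMonoidHom.mk' A hadd with hA'
  have hden : ((q.den : ℂ)) ≠ 0 := by
    exact_mod_cast (Nat.cast_ne_zero (R := ℂ)).2 q.den_nz
  have e1 : (q.den : ℂ) • A ((q : ℂ) • z) = (q.den : ℂ) • ((q:ℂ) • A z) := by
    have h1 : (q.den : ℂ) • A ((q : ℂ) • z) = A' ((q.den : ℕ) • ((q:ℂ) • z)) := by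
      rw [map_nsmul]
      rw [Nat.cast_smul_eq_nsmul]
      rfl
    have h2 : ((q.den : ℕ) • ((q:ℂ) • z)) = ((q.num : ℂ) • z) := by
      rw [Nat.cast_smul_eq_nsmul (R := ℂ) q.den ((q:ℂ) • z) |>.symm]
      rw [smul_smul]
      congr 1
      rw [Rat.cast_def]
      field_simp
    rw [h1, h2]
    have h3 : ((q.num : ℂ) • z) = (q.num : ℤ) • z := (Int.cast_smul_eq_zsmul ℂ _ _)
    rw [h3, map_zsmul]
    show (q.num : ℤ) • A z = _
    rw [← Int.cast_smul_eq_zsmul ℂ, smul_smul]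
    congr 1
    rw [Rat.cast_def]
    field_simp
  exact smul_right_injective K hden e1

private lemma key1 (hadd : ∀ x y, A (x + y) = A x + A y)
    (hop : ∀ x y : H, ⟪x, y⟫ = 0 → ⟪A x, A y⟫ = 0)
    (x y : H) (hx : ‖x‖ = 1) (hy : ‖y‖ = 1) (hxy : ⟪x, y⟫ = 0)
    (s t u v : ℝ) (h : s * u + t * v = 0) :
    ⟪A ((s:ℂ) • x), A ((u:ℂ) • x)⟫ + ⟪A ((t:ℂ) • y), A ((v:ℂ) • y)⟫ = 0 := by
  have hyx : ⟪y, x⟫ = 0 := by rw [← inner_conj_symm, hxy]; simp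
  have h1 : ⟪(s:ℂ) • x + (t:ℂ) • y, (u:ℂ) • x + (v:ℂ) • y⟫ = 0 := by
    simp only [inner_add_left, inner_add_right, inner_smul_left, inner_smul_right, hxy, hyx,
      inner_self_c, hx, hy, Complex.conj_ofReal, mul_zero, add_zero, zero_add]
    push_cast
    have : ((s * u + t * v : ℝ) : ℂ) = 0 := by rw [h]; norm_num
    push_cast at this
    linear_combination this
  have h2 := hop _ _ h1
  rw [hadd, hadd] at h2
  rw [inner_add_left, inner_add_right, inner_add_right] at h2
  have c1 : ⟪A ((s:ℂ) • x), A ((v:ℂ) • y)⟫ = 0 := by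
    apply hop
    rw [inner_smul_left, inner_smul_right, hxy]; ring
  have c2 : ⟪A ((t:ℂ) • y), A ((u:ℂ) • x)⟫ = 0 := by
    apply hop
    rw [inner_smul_left, inner_smul_right, hyx]; ring
  linear_combination h2 - c1 - c2

end AOP

section AOP2
variable {H K : Type*} [NormedAddCommGroup H] [InnerProductSpace ℂ H]
    [NormedAddCommGroup K] [InnerProductSpace ℂ K]
    {A : H → K}

private lemma Ppos (hadd : ∀ x y, A (x + y) = A x + A y)
    (hop : ∀ x y : H, ⟪x, y⟫ = 0 → ⟪A x, A y⟫ = 0)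
    (x y : H) (hx : ‖x‖ = 1) (hy : ‖y‖ = 1) (hxy : ⟪x, y⟫ = 0)
    (t v : ℝ) (h : 0 ≤ t * v) :
    ⟪A ((t:ℂ) • x), A ((v:ℂ) • x)⟫ = ((‖A (((Real.sqrt (t*v) : ℝ) : ℂ) • y)‖^2 : ℝ) : ℂ) := by
  have hyx : ⟪y, x⟫ = 0 := by rw [← inner_conj_symm, hxy]; simp
  set σ := Real.sqrt (t*v) with hσdef
  have hσ : σ * (-σ) + t * v = 0 := by
    have h2 := Real.mul_self_sqrt h
    simp only [hσdef, mul_neg]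
    linarith
  have hk := key1 hadd hop y x hy hx hyx σ t (-σ) v hσ
  have hneg : A (((-σ : ℝ):ℂ) • y) = - A (((σ:ℝ):ℂ) • y) := by
    have h3 : ((-σ : ℝ):ℂ) • y = -(((σ:ℝ):ℂ) • y) := by push_cast; rw [neg_smul]
    rw [h3]
    exact map_neg (AddMonoidHom.mk' A hadd) _
  rw [hneg, inner_neg_right, inner_self_c] at hk
  push_cast at hk ⊢
  linear_combination hk

private lemma Pneg (hadd : ∀ x y, A (x + y) = A x + A y)
    (hop : ∀ x y : H, ⟪x, y⟫ = 0 → ⟪A x, A y⟫ = 0)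
    (x y : H) (hx : ‖x‖ = 1) (hy : ‖y‖ = 1) (hxy : ⟪x, y⟫ = 0)
    (t v : ℝ) (h : t * v ≤ 0) :
    ⟪A ((t:ℂ) • x), A ((v:ℂ) • x)⟫ = -((‖A (((Real.sqrt (-(t*v)) : ℝ) : ℂ) • y)‖^2 : ℝ) : ℂ) := by
  have hyx : ⟪y, x⟫ = 0 := by rw [← inner_conj_symm, hxy]; simp
  set σ := Real.sqrt (-(t*v)) with hσdef
  have hσ : σ * σ + t * v = 0 := by
    have h2 := Real.mul_self_sqrt (neg_nonneg.2 h)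
    simp only [hσdef]
    linarith
  have hk := key1 hadd hop y x hy hx hyx σ t σ v hσ
  rw [inner_self_c] at hk
  push_cast at hk ⊢
  linear_combination hk

end AOP2

section AOP3
variable {H K : Type*} [NormedAddCommGroup H] [InnerProductSpace ℂ H]
    [NormedAddCommGroup K] [InnerProductSpace ℂ K]
    {A : H → K}

private lemma unit_realhom (hadd : ∀ x y, A (x + y) = A x + A y)
    (hop : ∀ x y : H, ⟪x, y⟫ = 0 → ⟪A x, A y⟫ = 0)
    (x y : H) (hx : ‖x‖ = 1) (hy : ‖y‖ = 1) (hxy : ⟪x, y⟫ = 0)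
    (t : ℝ) : A ((t:ℂ) • x) = (t:ℂ) • A x := by
  have hyx : ⟪y, x⟫ = 0 := by rw [← inner_conj_symm, hxy]; simp
  set g : ℝ → ℝ := fun s => ‖A ((s:ℂ) • x)‖^2 with hgdef
  have hA0 : A 0 = 0 := map_zero (AddMonoidHom.mk' A hadd)
  have hAneg : ∀ z : H, A (-z) = - A z := fun z => map_neg (AddMonoidHom.mk' A hadd) z
  -- gy in terms of g on nonnegative arguments
  have hgy : ∀ σ : ℝ, 0 ≤ σ → ‖A ((σ:ℂ) • y)‖^2 = g σ := by
    intro σ hσ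
    have h := Ppos hadd hop y x hy hx hyx σ σ (mul_self_nonneg σ)
    rw [inner_self_c, Real.sqrt_mul_self hσ] at h
    exact_mod_cast h
  have hPpos : ∀ a b : ℝ, 0 ≤ a * b →
      ⟪A ((a:ℂ) • x), A ((b:ℂ) • x)⟫ = ((g (Real.sqrt (a*b)) : ℝ) : ℂ) := by
    intro a b h
    rw [Ppos hadd hop x y hx hy hxy a b h, hgy _ (Real.sqrt_nonneg _)]
  have hPneg : ∀ a b : ℝ, a * b ≤ 0 →
      ⟪A ((a:ℂ) • x), A ((b:ℂ) • x)⟫ = -((g (Real.sqrt (-(a*b))) : ℝ) : ℂ) := by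
    intro a b h
    rw [Pneg hadd hop x y hx hy hxy a b h, hgy _ (Real.sqrt_nonneg _)]
  have hgnn : ∀ s : ℝ, 0 ≤ g s := fun s => by positivity
  have hg0 : g 0 = 0 := by
    simp only [hgdef, Complex.ofReal_zero, zero_smul, hA0, norm_zero]
    norm_num
  have hgadd : ∀ a b : ℝ, 0 ≤ a * b →
      g (a + b) = g a + g b + 2 * g (Real.sqrt (a*b)) := by
    intro a b hab
    have hsplit : (((a+b : ℝ)):ℂ) • x = (a:ℂ) • x + (b:ℂ) • x := by
      push_cast; rw [add_smul]
    have h1 : g (a+b) = ‖A ((a:ℂ) • x) + A ((b:ℂ) • x)‖^2 := by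
      simp only [hgdef]; rw [hsplit, hadd]
    rw [h1, norm_add_sq (𝕜 := ℂ), hPpos a b hab]
    simp only [hgdef, RCLike.re_to_complex, Complex.ofReal_re]
    ring
  have hmono : ∀ a w : ℝ, 0 ≤ a → a ≤ w → g a ≤ g w := by
    intro a w ha haw
    have h1 : g w = g a + g (w - a) + 2 * g (Real.sqrt (a*(w-a))) := by
      have := hgadd a (w-a) (mul_nonneg ha (by linarith))
      rwa [add_sub_cancel] at this
    nlinarith [hgnn (w-a), hgnn (Real.sqrt (a*(w-a)))]
  have hq : ∀ q : ℚ, g (q:ℝ) = (q:ℝ)^2 * g 1 := by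
    intro q
    have h1 : (((q:ℝ)):ℂ) • x = (q:ℂ) • (((1:ℝ)):ℂ) • x := by
      push_cast; rw [smul_smul, mul_one]
    have h2 : g (q:ℝ) = ‖(q:ℂ) • A (((1:ℝ):ℂ) • x)‖^2 := by
      simp only [hgdef]; rw [h1, ratSmul hadd]
    rw [h2, norm_smul]
    have h3 : ‖(q:ℂ)‖ = |(q:ℝ)| := by
      rw [show ((q:ℂ)) = (((q:ℝ)):ℂ) by push_cast; ring, Complex.norm_real]
      rfl
    rw [h3, mul_pow, sq_abs]
  have hupper : ∀ s : ℝ, 0 ≤ s → g s ≤ s^2 * g 1 := by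
    intro s hs
    by_contra hcon
    push_neg at hcon
    rcases (hgnn 1).lt_or_eq with h1 | h1
    · set r := Real.sqrt (g s / g 1) with hrdef
      have hr2 : r^2 = g s / g 1 := Real.sq_sqrt (div_nonneg (hgnn s) h1.le)
      have hrr : s < r := by
        have h2 : s^2 < g s / g 1 := (lt_div_iff₀ h1).2 (by linarith)
        calc s = Real.sqrt (s^2) := (Real.sqrt_sq hs).symm
        _ < r := Real.sqrt_lt_sqrt (sq_nonneg s) h2
      obtain ⟨q, hq1, hq2⟩ := exists_rat_btwn hrr
      have hmq := hmono s q hs hq1.le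
      rw [hq q] at hmq
      have hq0 : (0:ℝ) ≤ (q:ℝ) := le_trans hs hq1.le
      have h4 : (q:ℝ)^2 < g s / g 1 := by
        rw [← hr2]; nlinarith [mul_self_lt_mul_self hq0 hq2]
      have h5 : (q:ℝ)^2 * g 1 < g s := (lt_div_iff₀ h1).1 h4
      linarith
    · obtain ⟨q, hq1, hq2⟩ := exists_rat_btwn (lt_add_one s)
      have hmq := hmono s q hs hq1.le
      rw [hq q, ← h1] at hmq
      nlinarith [hgnn s]
  have hlower : ∀ s : ℝ, 0 ≤ s → s^2 * g 1 ≤ g s := by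
    intro s hs
    by_contra hcon
    push_neg at hcon
    have h1 : 0 < g 1 := by nlinarith [hgnn s, hgnn 1, sq_nonneg s]
    set r := Real.sqrt (g s / g 1) with hrdef
    have hr0 : 0 ≤ r := Real.sqrt_nonneg _
    have hr2 : r^2 = g s / g 1 := Real.sq_sqrt (div_nonneg (hgnn s) h1.le)
    have hrs : r < s := by
      have h2 : g s / g 1 < s^2 := (div_lt_iff₀ h1).2 (by linarith)
      calc r < Real.sqrt (s^2) := Real.sqrt_lt_sqrt (div_nonneg (hgnn s) h1.le) h2
      _ = s := Real.sqrt_sq hs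
    obtain ⟨q, hq1, hq2⟩ := exists_rat_btwn hrs
    have hq0 : (0:ℝ) ≤ (q:ℝ) := le_trans hr0 hq1.le
    have hmq := hmono q s hq0 hq2.le
    rw [hq q] at hmq
    have h5 : g s / g 1 < (q:ℝ)^2 := by
      rw [← hr2]; nlinarith [mul_self_lt_mul_self hr0 hq1]
    have h6 : g s < (q:ℝ)^2 * g 1 := (div_lt_iff₀ h1).1 h5
    linarith
  have hgs : ∀ s : ℝ, 0 ≤ s → g s = s^2 * g 1 := fun s hs =>
    le_antisymm (hupper s hs) (hlower s hs)
  have hgabs : ∀ s : ℝ, g s = s^2 * g 1 := by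
    intro s
    rcases le_or_gt 0 s with hs | hs
    · exact hgs s hs
    · have h1 : ((s:ℝ):ℂ) • x = -(((-s:ℝ)):ℂ) • x := by push_cast; ring_nf
      have h2 : g s = g (-s) := by
        simp only [hgdef]
        rw [h1, neg_smul, hAneg, norm_neg]
      rw [h2, hgs (-s) (by linarith)]
      ring
  have hP1 : ⟪A ((t:ℂ) • x), A x⟫ = ((t * g 1 : ℝ) : ℂ) := by
    have hone : (((1:ℝ)):ℂ) • x = x := by norm_num
    rcases le_or_gt 0 t with ht | ht
    · have h := hPpos t 1 (by linarith [mul_one t])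
      rw [mul_one] at h
      rw [hgs (Real.sqrt t) (Real.sqrt_nonneg t), Real.sq_sqrt ht, hone] at h
      exact h
    · have h := hPneg t 1 (by nlinarith)
      rw [mul_one] at h
      rw [hgs (Real.sqrt (-t)) (Real.sqrt_nonneg _), Real.sq_sqrt (by linarith), hone] at h
      rw [h]
      push_cast
      ring
  have hAx : ‖A x‖^2 = g 1 := by
    simp only [hgdef]
    norm_num
  have hzero : ‖A ((t:ℂ) • x) - (t:ℂ) • A x‖^2 = 0 := by
    rw [norm_sub_sq (𝕜 := ℂ), inner_smul_right, hP1, norm_smul]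
    have h1 : ‖A ((t:ℂ) • x)‖^2 = t^2 * g 1 := hgabs t
    have h2 : ‖(t:ℂ)‖ = |t| := Complex.norm_real t
    rw [h1, h2, mul_pow, sq_abs, hAx]
    have h3 : RCLike.re ((t:ℂ) * ((t * g 1 : ℝ) : ℂ)) = t * (t * g 1) := by
      rw [show ((t:ℂ) * ((t * g 1 : ℝ) : ℂ)) = (((t * (t * g 1) : ℝ)):ℂ) by push_cast; ring]
      exact Complex.ofReal_re _
    rw [h3]
    ring
  have h4 : A ((t:ℂ) • x) - (t:ℂ) • A x = 0 := by
    have := (pow_eq_zero_iff (two_ne_zero)).1 hzero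
    exact norm_eq_zero.1 this
  exact sub_eq_zero.1 h4

end AOP3

section AOP4
variable {H K : Type*} [NormedAddCommGroup H] [InnerProductSpace ℂ H]
    [NormedAddCommGroup K] [InnerProductSpace ℂ K]
    {A : H → K}

private lemma exists_unit_orth [FiniteDimensional ℂ H] (hdim : 2 ≤ Module.finrank ℂ H)
    (x : H) (hx : ‖x‖ = 1) : ∃ y : H, ‖y‖ = 1 ∧ ⟪x, y⟫ = 0 := by
  have hx0 : x ≠ 0 := by intro h; rw [h, norm_zero] at hx; norm_num at hx
  set S := (ℂ ∙ x)ᗮ with hS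
  have h1 : Module.finrank ℂ (ℂ ∙ x) + Module.finrank ℂ S = Module.finrank ℂ H :=
    Submodule.finrank_add_finrank_orthogonal _
  rw [finrank_span_singleton hx0] at h1
  have h2 : 0 < Module.finrank ℂ S := by omega
  have h3 : S ≠ ⊥ := by
    intro h
    rw [h, finrank_bot] at h2
    omega
  obtain ⟨v, hvS, hv0⟩ := Submodule.exists_mem_ne_zero_of_ne_bot h3
  refine ⟨((‖v‖⁻¹ : ℝ) : ℂ) • v, ?_, ?_⟩
  · rw [norm_smul, Complex.norm_real, norm_inv, norm_norm]
    exact inv_mul_cancel₀ (norm_ne_zero_iff.mpr hv0)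
  · rw [inner_smul_right]
    have : ⟪x, v⟫ = 0 := by
      have := hvS
      rw [hS, Submodule.mem_orthogonal] at this
      exact (this x (Submodule.mem_span_singleton_self x))
    rw [this, mul_zero]

private lemma realHom [FiniteDimensional ℂ H] (hdim : 2 ≤ Module.finrank ℂ H)
    (hadd : ∀ x y, A (x + y) = A x + A y)
    (hop : ∀ x y : H, ⟪x, y⟫ = 0 → ⟪A x, A y⟫ = 0)
    (t : ℝ) (z : H) : A ((t:ℂ) • z) = (t:ℂ) • A z := by
  rcases eq_or_ne z 0 with hz | hz
  · rw [hz, smul_zero]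
    have hA0 : A 0 = 0 := map_zero (AddMonoidHom.mk' A hadd)
    rw [hA0, smul_zero]
  · set u : H := ((‖z‖⁻¹ : ℝ) : ℂ) • z with hu
    have hnu : ‖u‖ = 1 := by
      rw [hu, norm_smul, Complex.norm_real, norm_inv, norm_norm]
      exact inv_mul_cancel₀ (norm_ne_zero_iff.mpr hz)
    obtain ⟨y, hy1, hy2⟩ := exists_unit_orth hdim u hnu
    have hkey := fun (r : ℝ) => unit_realhom hadd hop u y hnu hy1 hy2 r
    have hz' : z = ((‖z‖ : ℝ) : ℂ) • u := by
      rw [hu, smul_smul]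
      rw [show ((‖z‖ : ℝ) : ℂ) * ((‖z‖⁻¹ : ℝ) : ℂ) = 1 by
        rw [← Complex.ofReal_mul, mul_inv_cancel₀ (norm_ne_zero_iff.mpr hz), Complex.ofReal_one]]
      rw [one_smul]
    calc A ((t:ℂ) • z) = A (((t * ‖z‖ : ℝ) : ℂ) • u) := by
          congr 1
          conv_lhs => rw [hz']
          rw [smul_smul, ← Complex.ofReal_mul]
    _ = ((t * ‖z‖ : ℝ) : ℂ) • A u := hkey _
    _ = (t:ℂ) • ((‖z‖ : ℝ) : ℂ) • A u := by rw [smul_smul, ← Complex.ofReal_mul]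
    _ = (t:ℂ) • A z := by rw [← hkey ‖z‖, ← hz']

end AOP4

section AOP5
variable {H K : Type*} [NormedAddCommGroup H] [InnerProductSpace ℂ H]
    [NormedAddCommGroup K] [InnerProductSpace ℂ K]
    {A : H → K}

private lemma M1 (hadd : ∀ x y, A (x + y) = A x + A y)
    (hop : ∀ x y : H, ⟪x, y⟫ = 0 → ⟪A x, A y⟫ = 0)
    (x y : H) (hnorm : ‖x‖ = ‖y‖) (hxy : ⟪x, y⟫ = 0) : ‖A x‖ = ‖A y‖ := by
  have hyx : ⟪y, x⟫ = 0 := by rw [← inner_conj_symm, hxy]; simp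
  have hsub : ∀ a b : H, A (a - b) = A a - A b := fun a b =>
    map_sub (AddMonoidHom.mk' A hadd) a b
  have h1 : ⟪x + y, x - y⟫ = 0 := by
    rw [inner_add_left, inner_sub_right, inner_sub_right, inner_self_c, inner_self_c,
      hxy, hyx, hnorm]
    ring
  have h2 := hop _ _ h1
  rw [hadd, hsub, inner_add_left, inner_sub_right, inner_sub_right,
    hop x y hxy, hop y x hyx, inner_self_c, inner_self_c] at h2
  have h3 : ((‖A x‖^2 : ℝ) : ℂ) = ((‖A y‖^2 : ℝ) : ℂ) := by linear_combination h2
  have h4 : (‖A x‖^2 : ℝ) = (‖A y‖^2 : ℝ) := by exact_mod_cast h3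
  calc ‖A x‖ = Real.sqrt (‖A x‖^2) := (Real.sqrt_sq (norm_nonneg _)).symm
  _ = Real.sqrt (‖A y‖^2) := by rw [h4]
  _ = ‖A y‖ := Real.sqrt_sq (norm_nonneg _)

private lemma M2 (hadd : ∀ x y, A (x + y) = A x + A y)
    (hop : ∀ x y : H, ⟪x, y⟫ = 0 → ⟪A x, A y⟫ = 0)
    (x y : H) (hx : ‖x‖ = 1) (hy : ‖y‖ = 1) (hxy : ⟪x, y⟫ = 0) :
    ⟪A x, A (Complex.I • x)⟫ = ⟪A y, A (Complex.I • y)⟫ := by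
  have hyx : ⟪y, x⟫ = 0 := by rw [← inner_conj_symm, hxy]; simp
  have hsub : ∀ a b : H, A (a - b) = A a - A b := fun a b =>
    map_sub (AddMonoidHom.mk' A hadd) a b
  have h1 : ⟪x + y, Complex.I • x - Complex.I • y⟫ = 0 := by
    rw [inner_add_left, inner_sub_right, inner_sub_right, inner_smul_right, inner_smul_right,
      inner_smul_right, inner_smul_right, inner_self_c, inner_self_c, hxy, hyx, hx, hy]
    ring
  have h2 := hop _ _ h1
  rw [hadd, hsub, inner_add_left, inner_sub_right, inner_sub_right] at h2
  have c1 : ⟪A x, A (Complex.I • y)⟫ = 0 :=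
    hop _ _ (by rw [inner_smul_right, hxy, mul_zero])
  have c2 : ⟪A y, A (Complex.I • x)⟫ = 0 :=
    hop _ _ (by rw [inner_smul_right, hyx, mul_zero])
  rw [c1, c2] at h2
  linear_combination h2

private lemma M3 (hadd : ∀ x y, A (x + y) = A x + A y)
    (hop : ∀ x y : H, ⟪x, y⟫ = 0 → ⟪A x, A y⟫ = 0)
    (x y : H) (hx : ‖x‖ = 1) (hy : ‖y‖ = 1) (hxy : ⟪x, y⟫ = 0) :
    ⟪A x, A (Complex.I • x)⟫ = -(starRingEnd ℂ) ⟪A y, A (Complex.I • y)⟫ := by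
  have hyx : ⟪y, x⟫ = 0 := by rw [← inner_conj_symm, hxy]; simp
  have h1 : ⟪x + Complex.I • y, Complex.I • x + y⟫ = 0 := by
    rw [inner_add_left, inner_add_right, inner_add_right, inner_smul_left, inner_smul_left,
      inner_smul_right, inner_smul_right, inner_self_c, inner_self_c, hxy, hyx, hx, hy,
      Complex.conj_I]
    ring
  have h2 := hop _ _ h1
  rw [hadd, hadd, inner_add_left, inner_add_right, inner_add_right] at h2
  have c1 : ⟪A x, A y⟫ = 0 := hop _ _ hxy
  have c2 : ⟪A (Complex.I • y), A (Complex.I • x)⟫ = 0 :=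
    hop _ _ (by rw [inner_smul_left, inner_smul_right, hyx]; ring)
  rw [c1, c2] at h2
  have h4 : (starRingEnd ℂ) ⟪A y, A (Complex.I • y)⟫ = ⟪A (Complex.I • y), A y⟫ :=
    inner_conj_symm _ _
  linear_combination h2 + h4

end AOP5

/-- If `H` and `K` are finite-dimensional complex Hilbert spaces with
`2 ≤ dim H` and `dim K < 2 dim H`, then every additive orthogonality preserving
map `A : H → K` is complex-linear or conjugate-linear. -/
theorem additive_op_finiteDimensional_is_linear_or_conjugateLinear
    {H K : Type*} [NormedAddCommGroup H] [InnerProductSpace ℂ H]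
    [NormedAddCommGroup K] [InnerProductSpace ℂ K]
    [FiniteDimensional ℂ H] [FiniteDimensional ℂ K]
    (hdimH : 2 ≤ Module.finrank ℂ H)
    (hdimK : Module.finrank ℂ K < 2 * Module.finrank ℂ H)
    (A : H → K)
    (hadd : ∀ x y, A (x + y) = A x + A y)
    (hop : ∀ x y : H, ⟪x, y⟫ = 0 → ⟪A x, A y⟫ = 0) :
    (∀ (l : ℂ) (x : H), A (l • x) = l • A x) ∨
      (∀ (l : ℂ) (x : H), A (l • x) = (starRingEnd ℂ l) • A x) := by
  classical
  set n := Module.finrank ℂ H with hn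
  set e : OrthonormalBasis (Fin n) ℂ H := stdOrthonormalBasis ℂ H with he
  have honb := e.orthonormal
  have hunit : ∀ j, ‖e j‖ = 1 := honb.1
  have horth : ∀ {j k : Fin n}, j ≠ k → ⟪e j, e k⟫ = 0 := fun h => honb.2 h
  have hrH : ∀ (t : ℝ) (z : H), A ((t:ℂ) • z) = (t:ℂ) • A z := realHom hdimH hadd hop
  have hAsum : ∀ (f : Fin n → H), A (∑ j, f j) = ∑ j, A (f j) := fun f =>
    map_sum (AddMonoidHom.mk' A hadd) f Finset.univ
  have hIunit : ∀ v : H, ‖Complex.I • v‖ = ‖v‖ := fun v => by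
    rw [norm_smul, Complex.norm_I, one_mul]
  have hIorth : ∀ {j k : Fin n}, j ≠ k → ⟪Complex.I • e j, e k⟫ = 0 := fun h => by
    rw [inner_smul_left, horth h, mul_zero]
  have hn0 : 0 < n := by omega
  have hn1 : 1 < n := by omega
  set j0 : Fin n := ⟨0, hn0⟩ with hj0
  set j1 : Fin n := ⟨1, hn1⟩ with hj1
  have hj01 : j0 ≠ j1 := by
    intro h
    rw [Fin.ext_iff] at h
    simp [hj0, hj1] at h
  set kf : Fin n → Fin n := fun j => if j = j0 then j1 else j0 with hkfdef
  have hkf : ∀ j, j ≠ kf j := by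
    intro j
    simp only [hkfdef]
    by_cases h : j = j0
    · rw [if_pos h, h]; exact hj01
    · rw [if_neg h]; exact h
  set c : ℝ := ‖A (e j0)‖ with hc
  have hca : ∀ j, ‖A (e j)‖ = c := by
    intro j
    rcases eq_or_ne j j0 with h | h
    · rw [h]
    · exact M1 hadd hop (e j) (e j0) (by rw [hunit, hunit]) (horth h)
  have hcb : ∀ j, ‖A (Complex.I • e j)‖ = c := by
    intro j
    have h1 : ‖A (Complex.I • e j)‖ = ‖A (e (kf j))‖ :=
      M1 hadd hop _ _ (by rw [hIunit, hunit, hunit]) (hIorth (hkf j))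
    rw [h1, hca]
  set w : ℂ := ⟪A (e j0), A (Complex.I • e j0)⟫ with hwdef
  have hw : ∀ j, ⟪A (e j), A (Complex.I • e j)⟫ = w := by
    intro j
    rcases eq_or_ne j j0 with h | h
    · rw [h]
    · exact (M2 hadd hop (e j0) (e j) (hunit _) (hunit _) (horth (Ne.symm h))).symm
  have hwconj : w = -(starRingEnd ℂ) w := by
    have h1 := M3 hadd hop (e j0) (e j1) (hunit _) (hunit _) (horth hj01)
    rw [hw j0, hw j1] at h1
    exact h1
  have hre : w.re = 0 := by
    have h2 := congrArg Complex.re hwconj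
    simp only [Complex.neg_re, Complex.conj_re] at h2
    linarith
  have hCS : ‖w‖ ≤ c * c := by
    calc ‖w‖ ≤ ‖A (e j0)‖ * ‖A (Complex.I • e j0)‖ := norm_inner_le_norm _ _
    _ = c * c := by rw [hca j0, hcb j0]
  have hmain : ∃ s : ℝ, (s = 1 ∨ s = -1) ∧
      ∀ j, A (Complex.I • e j) = (Complex.I * ((s : ℝ) : ℂ)) • A (e j) := by
    rcases eq_or_ne c 0 with hc0 | hc0
    · refine ⟨1, Or.inl rfl, fun j => ?_⟩
      have h1 : A (Complex.I • e j) = 0 := norm_eq_zero.1 (by rw [hcb j, hc0])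
      have h2 : A (e j) = 0 := norm_eq_zero.1 (by rw [hca j, hc0])
      rw [h1, h2, smul_zero]
    · have hcpos : 0 < c := lt_of_le_of_ne (norm_nonneg _) (Ne.symm hc0)
      have hwc : ‖w‖ = c * c := by
        rcases lt_or_eq_of_le hCS with hlt | heq
        · exfalso
          set f : Fin n × Bool → K :=
            fun p => if p.2 then A (Complex.I • e p.1) else A (e p.1) with hf
          have hft : ∀ j : Fin n, f (j, true) = A (Complex.I • e j) := fun j => rfl
          have hff : ∀ j : Fin n, f (j, false) = A (e j) := fun j => rfl
          have hli : LinearIndependent ℂ f := by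
            rw [Fintype.linearIndependent_iff]
            intro gc hsum
            have hk1 : ∀ k : Fin n,
                gc (k, true) * w + gc (k, false) * ((c^2 : ℝ) : ℂ) = 0 := by
              intro k
              have h0 : ⟪A (e k), ∑ p : Fin n × Bool, gc p • f p⟫ = 0 := by
                rw [hsum, inner_zero_right]
              rw [inner_sum] at h0
              simp only [inner_smul_right] at h0
              rw [Fintype.sum_prod_type] at h0
              have h2 : ∀ j : Fin n, j ∈ Finset.univ → j ≠ k →
                  (∑ bb : Bool, gc (j, bb) * ⟪A (e k), f (j, bb)⟫) = 0 := by
                intro j _ hjk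
                rw [Fintype.sum_bool]
                have z1 : ⟪A (e k), f (j, true)⟫ = 0 := by
                  rw [hft]
                  exact hop _ _ (by rw [inner_smul_right, horth (Ne.symm hjk), mul_zero])
                have z2 : ⟪A (e k), f (j, false)⟫ = 0 := by
                  rw [hff]
                  exact hop _ _ (horth (Ne.symm hjk))
                rw [z1, z2, mul_zero, mul_zero, add_zero]
              rw [Finset.sum_eq_single_of_mem k (Finset.mem_univ k) h2, Fintype.sum_bool] at h0
              have z3 : ⟪A (e k), f (k, true)⟫ = w := by
                rw [hft]
                exact hw k
              have z4 : ⟪A (e k), f (k, false)⟫ = ((c^2 : ℝ) : ℂ) := by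
                rw [hff, inner_self_c, hca k]
              rw [z3, z4] at h0
              exact h0
            have hk2 : ∀ k : Fin n,
                gc (k, true) * ((c^2 : ℝ) : ℂ) + gc (k, false) * (starRingEnd ℂ) w = 0 := by
              intro k
              have h0 : ⟪A (Complex.I • e k), ∑ p : Fin n × Bool, gc p • f p⟫ = 0 := by
                rw [hsum, inner_zero_right]
              rw [inner_sum] at h0
              simp only [inner_smul_right] at h0
              rw [Fintype.sum_prod_type] at h0
              have h2 : ∀ j : Fin n, j ∈ Finset.univ → j ≠ k →
                  (∑ bb : Bool, gc (j, bb) * ⟪A (Complex.I • e k), f (j, bb)⟫) = 0 := by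
                intro j _ hjk
                rw [Fintype.sum_bool]
                have z1 : ⟪A (Complex.I • e k), f (j, true)⟫ = 0 := by
                  rw [hft]
                  exact hop _ _ (by
                    rw [inner_smul_left, inner_smul_right, horth (Ne.symm hjk)]; ring)
                have z2 : ⟪A (Complex.I • e k), f (j, false)⟫ = 0 := by
                  rw [hff]
                  exact hop _ _ (hIorth (Ne.symm hjk))
                rw [z1, z2, mul_zero, mul_zero, add_zero]
              rw [Finset.sum_eq_single_of_mem k (Finset.mem_univ k) h2, Fintype.sum_bool] at h0
              have z3 : ⟪A (Complex.I • e k), f (k, true)⟫ = ((c^2 : ℝ) : ℂ) := by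
                rw [hft, inner_self_c, hcb k]
              have z4 : ⟪A (Complex.I • e k), f (k, false)⟫ = (starRingEnd ℂ) w := by
                rw [hff, ← inner_conj_symm, hw k]
              rw [z3, z4] at h0
              exact h0
            intro p
            obtain ⟨k, bb⟩ := p
            have e1 := hk1 k
            have e2 := hk2 k
            have hdetne : ((c^2 : ℝ) : ℂ) * ((c^2 : ℝ) : ℂ) - w * (starRingEnd ℂ) w ≠ 0 := by
              have h5 : w * (starRingEnd ℂ) w = ((‖w‖^2 : ℝ) : ℂ) := by
                rw [Complex.mul_conj]
                norm_cast
                rw [Complex.normSq_eq_norm_sq]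
              rw [h5, ← Complex.ofReal_mul, ← Complex.ofReal_sub]
              rw [Ne, Complex.ofReal_eq_zero]
              nlinarith [norm_nonneg w]
            have hgf : gc (k, false) = 0 := by
              have key : gc (k, false) *
                  (((c^2 : ℝ) : ℂ) * ((c^2 : ℝ) : ℂ) - w * (starRingEnd ℂ) w) = 0 := by
                linear_combination ((c^2 : ℝ) : ℂ) * e1 - w * e2
              rcases mul_eq_zero.1 key with h | h
              · exact h
              · exact absurd h hdetne
            have hgt : gc (k, true) = 0 := by
              have hc2 : ((c^2 : ℝ) : ℂ) ≠ 0 := by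
                rw [Ne, Complex.ofReal_eq_zero]
                positivity
              have key : gc (k, true) * ((c^2 : ℝ) : ℂ) = 0 := by
                linear_combination e2 - (starRingEnd ℂ) w * hgf
              rcases mul_eq_zero.1 key with h | h
              · exact h
              · exact absurd h hc2
            cases bb
            · exact hgf
            · exact hgt
          have hcard := hli.fintype_card_le_finrank
          rw [Fintype.card_prod, Fintype.card_fin, Fintype.card_bool] at hcard
          omega
        · exact heq
      have him : w.im = c * c ∨ w.im = -(c * c) := by
        have h1 : ‖w‖^2 = w.re^2 + w.im^2 := by
          rw [Complex.sq_norm, Complex.normSq_apply]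
          ring
        rw [hre] at h1
        have h2 : (w.im - c*c) * (w.im + c*c) = 0 := by nlinarith [hwc]
        rcases mul_eq_zero.1 h2 with h | h
        · left; linarith
        · right; linarith
      obtain ⟨s, hs, hsim⟩ : ∃ s : ℝ, (s = 1 ∨ s = -1) ∧ w.im = s * (c * c) := by
        rcases him with h | h
        · exact ⟨1, Or.inl rfl, by rw [h]; ring⟩
        · exact ⟨-1, Or.inr rfl, by rw [h]; ring⟩
      have hs2 : s * s = 1 := by rcases hs with h | h <;> rw [h] <;> norm_num
      have hs2c : ((s:ℝ):ℂ) * ((s:ℝ):ℂ) = 1 := by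
        rw [← Complex.ofReal_mul, hs2, Complex.ofReal_one]
      have hwv : w = ((s * (c * c) : ℝ) : ℂ) * Complex.I := by
        apply Complex.ext
        · simp [hre]
        · simp [hsim]
      refine ⟨s, hs, fun j => ?_⟩
      have h6 : ⟪A (Complex.I • e j), A (e j)⟫ = (starRingEnd ℂ) w := by
        rw [← inner_conj_symm, hw j]
      have h9 : (Complex.I * ((s:ℝ):ℂ)) * ((starRingEnd ℂ) w) = ((c * c : ℝ) : ℂ) := by
        rw [hwv, map_mul, Complex.conj_ofReal, Complex.conj_I]
        push_cast
        linear_combination (-(s:ℂ) * (s:ℂ) * ((c:ℂ) * (c:ℂ))) * Complex.I_mul_I +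
          ((c:ℂ) * (c:ℂ)) * hs2c
      have hns : ‖Complex.I * ((s:ℝ):ℂ)‖ = 1 := by
        rw [norm_mul, Complex.norm_I, Complex.norm_real, one_mul]
        rcases hs with h | h <;> rw [h] <;> norm_num
      have hzero : ‖A (Complex.I • e j) - (Complex.I * ((s:ℝ):ℂ)) • A (e j)‖^2 = 0 := by
        rw [norm_sub_sq (𝕜 := ℂ), inner_smul_right, h6, h9, norm_smul, hns, one_mul,
          hcb j, hca j]
        simp only [RCLike.re_to_complex, Complex.ofReal_re]
        ring
      have h10 : A (Complex.I • e j) - (Complex.I * ((s:ℝ):ℂ)) • A (e j) = 0 :=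
        norm_eq_zero.1 ((pow_eq_zero_iff two_ne_zero).1 hzero)
      exact sub_eq_zero.1 h10
  obtain ⟨s, hs, hsj⟩ := hmain
  have hs2 : s * s = 1 := by rcases hs with h | h <;> rw [h] <;> norm_num
  have hs2c : ((s:ℝ):ℂ) * ((s:ℝ):ℂ) = 1 := by
    rw [← Complex.ofReal_mul, hs2, Complex.ofReal_one]
  have hss : (Complex.I * ((s:ℝ):ℂ)) * (Complex.I * ((s:ℝ):ℂ)) = -1 := by
    rw [mul_mul_mul_comm, Complex.I_mul_I, hs2c]
    ring
  have hIz : ∀ z : H, A (Complex.I • z) = (Complex.I * ((s:ℝ):ℂ)) • A z := by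
    intro z
    have hrepr := e.sum_repr z
    have h1 : Complex.I • z = ∑ j, (Complex.I * e.repr z j) • e j := by
      conv_lhs => rw [← hrepr]
      rw [Finset.smul_sum]
      exact Finset.sum_congr rfl fun j _ => by rw [smul_smul]
    have hterm : ∀ j, A ((Complex.I * e.repr z j) • e j) =
        (Complex.I * ((s:ℝ):ℂ)) • A (e.repr z j • e j) := by
      intro j
      set μ : ℂ := e.repr z j with hμ
      have hd1 : (Complex.I * μ) • e j =
          ((μ.re : ℝ):ℂ) • (Complex.I • e j) + ((-μ.im : ℝ):ℂ) • e j := by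
        rw [smul_smul, ← add_smul]
        congr 1
        apply Complex.ext <;> simp
      have hd2 : μ • e j =
          ((μ.re : ℝ):ℂ) • e j + ((μ.im : ℝ):ℂ) • (Complex.I • e j) := by
        rw [smul_smul, ← add_smul]
        congr 1
        apply Complex.ext <;> simp
      rw [hd1, hadd, hrH, hrH, hsj j, hd2, hadd, hrH, hrH, hsj j]
      rw [smul_add, smul_smul, smul_smul, smul_smul, smul_smul, ← add_smul, ← add_smul]
      congr 1
      push_cast
      linear_combination (-(μ.im : ℂ)) * hss
    calc A (Complex.I • z) = ∑ j, A ((Complex.I * e.repr z j) • e j) := by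
          rw [h1, hAsum]
    _ = ∑ j, (Complex.I * ((s:ℝ):ℂ)) • A (e.repr z j • e j) :=
          Finset.sum_congr rfl fun j _ => hterm j
    _ = (Complex.I * ((s:ℝ):ℂ)) • ∑ j, A (e.repr z j • e j) := by rw [Finset.smul_sum]
    _ = (Complex.I * ((s:ℝ):ℂ)) • A z := by rw [← hAsum, hrepr]
  rcases hs with hs1 | hs1
  · left
    intro l x
    have hdec : l • x = ((l.re : ℝ):ℂ) • x + ((l.im : ℝ):ℂ) • (Complex.I • x) := by
      rw [smul_smul, ← add_smul]
      congr 1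
      apply Complex.ext <;> simp
    rw [hdec, hadd, hrH, hrH, hIz x, hs1]
    rw [smul_smul, ← add_smul]
    congr 1
    apply Complex.ext <;> simp
  · right
    intro l x
    have hdec : l • x = ((l.re : ℝ):ℂ) • x + ((l.im : ℝ):ℂ) • (Complex.I • x) := by
      rw [smul_smul, ← add_smul]
      congr 1
      apply Complex.ext <;> simp
    rw [hdec, hadd, hrH, hrH, hIz x, hs1]
    rw [smul_smul, ← add_smul]
    congr 1
    apply Complex.ext <;> simp
end

section
/- Let T : H̃ → K̃ be a real-linear isometry preserving orthogonality between two complex Hilbert spaces with dim(H̃) ≥ 2. Then there exists a bounded (continuous) real-linear map R : K̃ → K̃ such that the composition R ∘ T : H̃ → K̃ is a complex-linear isometry preserving orthogonality. -/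
open scoped ComplexInnerProductSpace

set_option maxHeartbeats 1000000 in
set_option synthInstance.maxHeartbeats 400000 in
/-- For every real-linear isometry `T` preserving orthogonality between complex
Hilbert spaces (`dim H̃ ≥ 2`) there is a bounded real-linear map `R` on the target
such that `R ∘ T` is a complex-linear isometry preserving orthogonality. -/
theorem exists_boundedRealLinear_compose_complexLinear
    {H K : Type*} [NormedAddCommGroup H] [InnerProductSpace ℂ H] [CompleteSpace H]
    [NormedAddCommGroup K] [InnerProductSpace ℂ K] [CompleteSpace K]
    (hdim : 2 ≤ Module.rank ℂ H)
    (T : H → K)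
    (hadd : ∀ x y, T (x + y) = T x + T y)
    (hsmul : ∀ (r : ℝ) (x : H), T (r • x) = r • T x)
    (hiso : ∀ x, ‖T x‖ = ‖x‖)
    (hop : ∀ x y : H, ⟪x, y⟫ = 0 → ⟪T x, T y⟫ = 0) :
    ∃ R : K →L[ℝ] K,
      (∀ x y : H, R (T (x + y)) = R (T x) + R (T y)) ∧
      (∀ (l : ℂ) (x : H), R (T (l • x)) = l • R (T x)) ∧
      (∀ x : H, ‖R (T x)‖ = ‖x‖) ∧
      (∀ x y : H, ⟪x, y⟫ = 0 → ⟪R (T x), R (T y)⟫ = 0) := by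
  letI : InnerProductSpace ℝ K := InnerProductSpace.complexToReal
  -- `T` as a real-linear isometry
  let Tl : H →ₗᵢ[ℝ] K :=
    ⟨{ toFun := T, map_add' := hadd, map_smul' := fun r x => hsmul r x }, hiso⟩
  -- a complex-linear isometry `S : H →ₗᵢ[ℂ] K`
  obtain ⟨w, b, hb⟩ := exists_hilbertBasis ℂ H
  have hbo : Orthonormal ℂ ((↑) : w → H) := hb ▸ b.orthonormal
  have hv : Orthonormal ℂ (fun i : w => T (i : H)) := by
    constructor
    · intro i
      rw [hiso]
      exact hbo.1 i
    · intro i j hij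
      exact hop _ _ (hbo.2 hij)
  let S : H →ₗᵢ[ℂ] K := (hv.orthogonalFamily.linearIsometry).comp b.repr.toLinearIsometry
  -- the closed (real) subspace `M = T(H)` of `K`
  haveI : CompleteSpace (⊤ : Submodule ℝ H) :=
    completeSpace_coe_iff_isComplete.2 (by rw [Submodule.top_coe]; exact complete_univ)
  haveI : CompleteSpace (LinearMap.range Tl.toLinearMap) := by
    rw [LinearMap.range_eq_map]
    exact Tl.completeSpace_map ⊤
  set M : Submodule ℝ K := LinearMap.range Tl.toLinearMap with hM
  let e : H ≃ₗᵢ[ℝ] M := Tl.equivRange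
  let R : K →L[ℝ] K :=
    ((S.toContinuousLinearMap.restrictScalars ℝ).comp
      e.symm.toLinearIsometry.toContinuousLinearMap).comp (Submodule.orthogonalProjection M)
  have key : ∀ x : H, R (T x) = S x := by
    intro x
    have h1 : Submodule.orthogonalProjection M (T x) = e x := by
      have : ((e x : M) : K) = T x := rfl
      rw [← this]
      exact Submodule.orthogonalProjection_mem_subspace_eq_self (e x)
    show (S.toContinuousLinearMap.restrictScalars ℝ)
        (e.symm.toLinearIsometry (Submodule.orthogonalProjection M (T x))) = S x
    rw [h1]
    have h2 : e.symm.toLinearIsometry (e x) = x := e.symm_apply_apply x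
    rw [h2]
    rfl
  refine ⟨R, ?_, ?_, ?_, ?_⟩
  · intro x y
    simp [key, map_add]
  · intro l x
    simp [key, map_smul]
  · intro x
    rw [key]
    exact S.norm_map x
  · intro x y h
    rw [key, key, S.inner_map_map]
    exact h
end

section
/- Let H and K be complex inner product spaces with dim(H) ≥ 2, and let A : H → K be a non-zero mapping with norm-dense image. Then the following statements are equivalent: (a) A is complex-linear or conjugate-linear and there exists γ > 0 with ‖A(x)‖ = γ‖x‖ for all x ∈ H (i.e., A is a positive scalar multiple of a complex-linear or a conjugate-linear isometry); (b) there exists γ₁ > 0 such that either ⟪A(x), A(y)⟫ = γ₁⟪x,y⟫ for all x, y ∈ H, or ⟪A(x), A(y)⟫ = γ₁⟪y,x⟫ for all x, y ∈ H; (c) A is complex-linear or conjugate-linear and preserves orthogonality in both directions; (d) A is complex-linear or conjugate-linear and preserves orthogonality; (e) A is additive and preserves orthogonality in both directions; (f) A is additive and preserves orthogonality. -/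
open scoped ComplexInnerProductSpace

namespace LiLiuPeraltaAux

open Complex

variable {H K : Type*} [NormedAddCommGroup H] [InnerProductSpace ℂ H]
  [NormedAddCommGroup K] [InnerProductSpace ℂ K]

lemma additive_monotone_linear (ψ : ℝ →+ ℝ) (hpos : ∀ t : ℝ, 0 ≤ t → 0 ≤ ψ t) (t : ℝ) :
    ψ t = ψ 1 * t := by
  have hq : ∀ q : ℚ, ψ (q : ℝ) = ψ 1 * (q : ℝ) := by
    intro q
    have h := map_ratCast_smul ψ ℝ ℝ q 1
    simpa [mul_comm] using h
  have hmono : ∀ a b : ℝ, a ≤ b → ψ a ≤ ψ b := by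
    intro a b hab
    have h0 := hpos (b - a) (by linarith)
    have h1 := ψ.map_sub b a
    rw [h1] at h0
    linarith
  have h1 : 0 ≤ ψ 1 := hpos 1 zero_le_one
  have hub : ∀ ε : ℝ, 0 < ε → ψ t ≤ ψ 1 * t + ε := by
    intro ε hε
    have hδ : 0 < ε / (ψ 1 + 1) := by positivity
    obtain ⟨q, hq1, hq2⟩ := exists_rat_btwn (show t < t + ε / (ψ 1 + 1) by linarith)
    have : ψ t ≤ ψ 1 * q := by rw [← hq q]; exact hmono _ _ hq1.le
    have h2 : ψ 1 * (q : ℝ) ≤ ψ 1 * (t + ε / (ψ 1 + 1)) := by nlinarith [hq2.le]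
    have h3 : ψ 1 * (ε / (ψ 1 + 1)) ≤ ε := by
      rw [mul_div_assoc']
      rw [div_le_iff₀ (by linarith)]
      nlinarith
    nlinarith
  have hlb : ∀ ε : ℝ, 0 < ε → ψ 1 * t - ε ≤ ψ t := by
    intro ε hε
    have hδ : 0 < ε / (ψ 1 + 1) := by positivity
    obtain ⟨q, hq1, hq2⟩ := exists_rat_btwn (show t - ε / (ψ 1 + 1) < t by linarith)
    have : ψ 1 * q ≤ ψ t := by rw [← hq q]; exact hmono _ _ hq2.le
    have h2 : ψ 1 * (t - ε / (ψ 1 + 1)) ≤ ψ 1 * (q : ℝ) := by nlinarith [hq1.le]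
    have h3 : ψ 1 * (ε / (ψ 1 + 1)) ≤ ε := by
      rw [mul_div_assoc']
      rw [div_le_iff₀ (by linarith)]
      nlinarith
    nlinarith
  have hle : ψ t ≤ ψ 1 * t := le_of_forall_pos_le_add fun ε hε => hub ε hε
  have hge : ψ 1 * t ≤ ψ t := by
    by_contra h
    push_neg at h
    obtain ⟨ε, hε, hlt⟩ : ∃ ε : ℝ, 0 < ε ∧ ψ 1 * t - ε > ψ t :=
      ⟨(ψ 1 * t - ψ t) / 2, by linarith, by linarith⟩
    exact absurd (hlb ε hε) (by linarith)
  linarith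

lemma key_identity (A : H → K) (hadd : ∀ x y, A (x + y) = A x + A y)
    (hop : ∀ x y : H, ⟪x, y⟫ = 0 → ⟪A x, A y⟫ = 0)
    {x y : H} (hx : ‖x‖ = 1) (hy : ‖y‖ = 1) (hxy : ⟪x, y⟫ = 0) (a c : ℂ) :
    ⟪A (a • x), A (c • x)⟫ = ⟪A y, A ((starRingEnd ℂ a * c) • y)⟫ := by
  have A' : H →+ K := AddMonoidHom.mk' A hadd
  have hAneg : ∀ v : H, A (-v) = -A v := fun v => (AddMonoidHom.mk' A hadd).map_neg v
  have hyx : ⟪y, x⟫ = 0 := by rw [← inner_conj_symm, hxy, map_zero]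
  have hxx : ⟪x, x⟫ = 1 := by
    rw [inner_self_eq_norm_sq_to_K, hx]; norm_num
  have hyy : ⟪y, y⟫ = 1 := by
    rw [inner_self_eq_norm_sq_to_K, hy]; norm_num
  set d : ℂ := -(starRingEnd ℂ a * c) with hd
  have h0 : ⟪a • x + y, c • x + d • y⟫ = 0 := by
    simp only [inner_add_left, inner_add_right, inner_smul_left, inner_smul_right,
      hxy, hyx, hxx, hyy, mul_one, mul_zero, add_zero, zero_add]
    rw [hd]; ring
  have h1 := hop _ _ h0
  rw [hadd, hadd] at h1
  simp only [inner_add_left, inner_add_right] at h1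
  have hc1 : ⟪A (a • x), A (d • y)⟫ = 0 := by
    refine hop _ _ ?_
    simp [inner_smul_left, inner_smul_right, hxy]
  have hc2 : ⟪A y, A (c • x)⟫ = 0 := by
    refine hop _ _ ?_
    simp [inner_smul_right, hyx]
  rw [hc1, hc2] at h1
  have h2 : ⟪A (a • x), A (c • x)⟫ = -⟪A y, A (d • y)⟫ := by linear_combination h1
  rw [h2, ← inner_neg_right, ← hAneg, ← neg_smul, hd, neg_neg]

lemma exists_orthonormal_pair (hdim : 2 ≤ Module.rank ℂ H) :
    ∃ x z : H, ‖x‖ = 1 ∧ ‖z‖ = 1 ∧ ⟪x, z⟫ = 0 := by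
  have h1 : ¬ Module.rank ℂ H ≤ 1 := by
    intro h
    have := le_trans hdim h
    norm_num at this
  rw [rank_le_one_iff] at h1
  push_neg at h1
  obtain ⟨x, hx⟩ := h1 0
  have hxne : x ≠ 0 := fun h => hx 0 (by simp [h])
  set xu : H := ((‖x‖ : ℂ))⁻¹ • x with hxu
  have hnx : (‖x‖ : ℝ) ≠ 0 := norm_ne_zero_iff.mpr hxne
  have hxu1 : ‖xu‖ = 1 := by
    rw [hxu, norm_smul, norm_inv, Complex.norm_real, Real.norm_eq_abs, abs_norm]
    field_simp
  have hxuxu : ⟪xu, xu⟫ = 1 := by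
    rw [inner_self_eq_norm_sq_to_K, hxu1]; norm_num
  obtain ⟨y, hy⟩ := h1 xu
  set w : H := y - ⟪xu, y⟫ • xu with hw
  have hwne : w ≠ 0 := by
    intro h
    have : ⟪xu, y⟫ • xu = y := by
      rw [hw] at h
      have := sub_eq_zero.mp h
      exact this.symm
    exact hy _ this
  have hxuw : ⟪xu, w⟫ = 0 := by
    rw [hw, inner_sub_right, inner_smul_right, hxuxu, mul_one, sub_self]
  set zu : H := ((‖w‖ : ℂ))⁻¹ • w with hzu
  have hnw : (‖w‖ : ℝ) ≠ 0 := norm_ne_zero_iff.mpr hwne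
  have hzu1 : ‖zu‖ = 1 := by
    rw [hzu, norm_smul, norm_inv, Complex.norm_real, Real.norm_eq_abs, abs_norm]
    field_simp
  refine ⟨xu, zu, hxu1, hzu1, ?_⟩
  rw [hzu, inner_smul_right, hxuw, mul_zero]

lemma ftob (hdim : 2 ≤ Module.rank ℂ H) (A : H → K) (hA : A ≠ 0) (hdense : DenseRange A)
    (hadd : ∀ x y, A (x + y) = A x + A y)
    (hop : ∀ x y : H, ⟪x, y⟫ = 0 → ⟪A x, A y⟫ = 0) :
    ∃ γ₁ : ℝ, 0 < γ₁ ∧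
      ((∀ x y : H, ⟪A x, A y⟫ = (γ₁ : ℂ) * ⟪x, y⟫) ∨
       (∀ x y : H, ⟪A x, A y⟫ = (γ₁ : ℂ) * ⟪y, x⟫)) := by
  obtain ⟨x₀, z₀, hx₀, hz₀, hxz⟩ := exists_orthonormal_pair hdim
  have hzx : ⟪z₀, x₀⟫ = 0 := by rw [← inner_conj_symm, hxz, map_zero]
  have hxx : ⟪x₀, x₀⟫ = 1 := by rw [inner_self_eq_norm_sq_to_K, hx₀]; norm_num
  set φ : ℂ → ℂ := fun w => ⟪A x₀, A (w • x₀)⟫ with hφdef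
  -- inner products along a unit vector orthogonal to x₀
  have hKIz : ∀ u : H, ‖u‖ = 1 → ⟪u, x₀⟫ = 0 → ∀ a c : ℂ,
      ⟪A (a • u), A (c • u)⟫ = φ (starRingEnd ℂ a * c) := by
    intro u hu hu0 a c
    rw [key_identity A hadd hop hu hx₀ hu0 a c]
  have hKIx : ∀ a c : ℂ, ⟪A (a • x₀), A (c • x₀)⟫ = φ (starRingEnd ℂ a * c) := by
    intro a c
    rw [key_identity A hadd hop hx₀ hz₀ hxz a c]
    have h := hKIz z₀ hz₀ hzx 1 (starRingEnd ℂ a * c)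
    rw [one_smul] at h
    simpa using h
  have hphi_add : ∀ w w' : ℂ, φ (w + w') = φ w + φ w' := by
    intro w w'
    simp only [hφdef]
    rw [add_smul, hadd, inner_add_right]
  have hφneg : ∀ w : ℂ, φ (-w) = - φ w := fun w =>
    map_neg (AddMonoidHom.mk' φ hphi_add) w
  have hφsub : ∀ u v : ℂ, φ (u - v) = φ u - φ v := fun u v =>
    map_sub (AddMonoidHom.mk' φ hphi_add) u v
  -- squares
  have hsq : ∀ a : ℂ, φ (starRingEnd ℂ a * a) = ((‖A (a • x₀)‖ : ℂ))^2 := by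
    intro a
    rw [← hKIx a a, inner_self_eq_norm_sq_to_K]
    norm_cast
  have hposre : ∀ t : ℝ, 0 ≤ t → φ ((t : ℂ)) = ((‖A ((Real.sqrt t : ℂ) • x₀)‖^2 : ℝ) : ℂ) := by
    intro t ht
    have h1 : (t : ℂ) = starRingEnd ℂ ((Real.sqrt t : ℝ) : ℂ) * ((Real.sqrt t : ℝ) : ℂ) := by
      rw [Complex.conj_ofReal, ← Complex.ofReal_mul, Real.mul_self_sqrt ht]
    rw [h1, hsq]
    push_cast
    ring
  -- φ is real-linear on the reals
  set ψ : ℝ → ℝ := fun t => (φ (t : ℂ)).re with hψdef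
  have hψadd : ∀ s t : ℝ, ψ (s + t) = ψ s + ψ t := by
    intro s t
    simp only [hψdef]
    push_cast
    rw [hphi_add, Complex.add_re]
  have hψpos : ∀ t : ℝ, 0 ≤ t → 0 ≤ ψ t := by
    intro t ht
    simp only [hψdef]
    rw [hposre t ht, Complex.ofReal_re]
    positivity
  have hψlin : ∀ t : ℝ, ψ t = ψ 1 * t := fun t =>
    additive_monotone_linear (AddMonoidHom.mk' ψ (fun s t => hψadd s t)) hψpos t
  set γ : ℝ := ψ 1 with hγdef
  have hγ0 : 0 ≤ γ := hψpos 1 zero_le_one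
  have him0 : ∀ t : ℝ, (φ (t : ℂ)).im = 0 := by
    intro t
    rcases le_total 0 t with h | h
    · rw [hposre t h, Complex.ofReal_im]
    · have h2 := hposre (-t) (by linarith)
      have h3 : φ ((t : ℝ) : ℂ) = - φ (((-t : ℝ)) : ℂ) := by
        have h4 : ((-t : ℝ) : ℂ) = -((t : ℝ) : ℂ) := by push_cast; ring
        rw [h4, hφneg, neg_neg]
      rw [h3, h2, Complex.neg_im, Complex.ofReal_im, neg_zero]
  have hφreal : ∀ t : ℝ, φ (t : ℂ) = ((γ * t : ℝ) : ℂ) := by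
    intro t
    apply Complex.ext
    · rw [Complex.ofReal_re]
      have := hψlin t
      simp only [hψdef] at this
      rw [this, hγdef]
    · rw [him0 t, Complex.ofReal_im]
  -- norm identities and boundedness of φ
  have hAx₀ : ‖A x₀‖^2 = γ := by
    have h1 := hsq 1
    simp only [map_one, one_mul, one_smul] at h1
    have h2 := hφreal 1
    rw [Complex.ofReal_one] at h2
    rw [h2] at h1
    have h4 : γ * 1 = ‖A x₀‖^2 := by exact_mod_cast h1
    linarith
  have hnormw : ∀ w : ℂ, ‖A (w • x₀)‖^2 = γ * ‖w‖^2 := by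
    intro w
    have h1 := hsq w
    have h2 : starRingEnd ℂ w * w = ((‖w‖^2 : ℝ) : ℂ) := by
      rw [mul_comm, Complex.mul_conj, Complex.normSq_eq_norm_sq]
    rw [h2, hφreal] at h1
    exact_mod_cast h1.symm
  have hbound : ∀ w : ℂ, ‖φ w‖ ≤ γ * ‖w‖ := by
    intro w
    have h1 : ‖φ w‖ ≤ ‖A x₀‖ * ‖A (w • x₀)‖ := norm_inner_le_norm _ _
    have h2 : ‖A x₀‖ = Real.sqrt γ := by
      rw [← hAx₀, Real.sqrt_sq (norm_nonneg _)]
    have h3 : ‖A (w • x₀)‖ = Real.sqrt γ * ‖w‖ := by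
      have := hnormw w
      have h4 : ‖A (w • x₀)‖ = Real.sqrt (γ * ‖w‖^2) := by
        rw [← this, Real.sqrt_sq (norm_nonneg _)]
      rw [h4, Real.sqrt_mul hγ0, Real.sqrt_sq (norm_nonneg _)]
    rw [h2, h3] at h1
    calc ‖φ w‖ ≤ Real.sqrt γ * (Real.sqrt γ * ‖w‖) := h1
    _ = γ * ‖w‖ := by rw [← mul_assoc, Real.mul_self_sqrt hγ0]
  have hcont : Continuous φ := by
    have hlip : LipschitzWith (Real.toNNReal γ) φ := by
      refine LipschitzWith.of_dist_le_mul ?_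
      intro a b
      rw [dist_eq_norm, dist_eq_norm, ← hφsub, Real.coe_toNNReal γ hγ0]
      exact hbound _
    exact hlip.continuous
  have hRmul : ∀ (t : ℝ) (w : ℂ), φ ((t : ℂ) * w) = (t : ℂ) * φ w := by
    intro t w
    have h := map_real_smul (AddMonoidHom.mk' φ hphi_add) hcont t w
    simpa [Complex.real_smul] using h
  -- the imaginary coefficient
  have hφconj : ∀ w : ℂ, φ (starRingEnd ℂ w) = starRingEnd ℂ (φ w) := by
    intro w
    have h1 := hKIx w 1
    have h2 := hKIx 1 w
    rw [mul_one] at h1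
    rw [map_one, one_mul] at h2
    calc φ (starRingEnd ℂ w) = ⟪A (w • x₀), A ((1:ℂ) • x₀)⟫ := h1.symm
    _ = starRingEnd ℂ ⟪A ((1:ℂ) • x₀), A (w • x₀)⟫ := (inner_conj_symm _ _).symm
    _ = starRingEnd ℂ (φ w) := by rw [h2]
  set δ : ℝ := (φ Complex.I).im with hδdef
  have hφI : φ Complex.I = (δ : ℂ) * Complex.I := by
    have h1 := hφconj Complex.I
    rw [Complex.conj_I, hφneg] at h1
    have h3 : (φ Complex.I).re = 0 := by
      have h4 := congrArg Complex.re h1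
      simp only [Complex.neg_re, Complex.conj_re] at h4
      linarith
    apply Complex.ext <;>
      simp [Complex.mul_re, Complex.mul_im, h3, hδdef]
  have hφz : ∀ z : ℂ, φ z = ((γ * z.re : ℝ) : ℂ) + ((δ * z.im : ℝ) : ℂ) * Complex.I := by
    intro z
    have h1 : z = ((z.re : ℝ) : ℂ) + ((z.im : ℝ) : ℂ) * Complex.I := (Complex.re_add_im z).symm
    calc φ z = φ (((z.re : ℝ) : ℂ) + ((z.im : ℝ) : ℂ) * Complex.I) := by rw [← h1]
    _ = φ ((z.re : ℝ) : ℂ) + φ (((z.im : ℝ) : ℂ) * Complex.I) := hphi_add _ _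
    _ = ((γ * z.re : ℝ) : ℂ) + ((z.im : ℝ) : ℂ) * φ Complex.I := by rw [hφreal, hRmul]
    _ = _ := by rw [hφI]; push_cast; ring
  -- Master formula, step 1: along any unit vector
  have hM1 : ∀ u : H, ‖u‖ = 1 → ∀ a c : ℂ,
      ⟪A (a • u), A (c • u)⟫ = φ (starRingEnd ℂ a * c) := by
    intro u hu a c
    set α : ℂ := ⟪x₀, u⟫ with hα
    set v : H := u - α • x₀ with hv
    have hx₀v : ⟪x₀, v⟫ = 0 := by
      rw [hv, inner_sub_right, inner_smul_right, hxx, mul_one, ← hα, sub_self]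
    have hvx₀ : ⟪v, x₀⟫ = 0 := by rw [← inner_conj_symm, hx₀v, map_zero]
    by_cases hvz : v = 0
    · rw [hv] at hvz
      have hu' : u = α • x₀ := (sub_eq_zero.mp hvz)
      have hnα : ‖α‖ = 1 := by
        have h2 : ‖u‖ = ‖α‖ * ‖x₀‖ := by rw [hu', norm_smul]
        rw [hx₀, mul_one] at h2
        exact h2.symm.trans hu
      have hαα : starRingEnd ℂ α * α = 1 := by
        rw [mul_comm, Complex.mul_conj, Complex.normSq_eq_norm_sq, hnα]
        norm_num
      rw [hu', smul_smul, smul_smul, hKIx (a*α) (c*α)]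
      congr 1
      have h3 : starRingEnd ℂ (a*α) * (c*α) = (starRingEnd ℂ a * c) * (starRingEnd ℂ α * α) := by
        rw [map_mul]; ring
      rw [h3, hαα, mul_one]
    · have hnv : (‖v‖ : ℝ) ≠ 0 := norm_ne_zero_iff.mpr hvz
      set z : H := ((‖v‖ : ℂ))⁻¹ • v with hz
      have hz1 : ‖z‖ = 1 := by
        rw [hz, norm_smul, norm_inv, Complex.norm_real, Real.norm_eq_abs, abs_norm]
        field_simp
      have hzx₀ : ⟪z, x₀⟫ = 0 := by rw [hz, inner_smul_left, hvx₀, mul_zero]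
      have hx₀z : ⟪x₀, z⟫ = 0 := by rw [← inner_conj_symm, hzx₀, map_zero]
      have hvz' : ((‖v‖ : ℂ)) • z = v := by
        rw [hz, smul_smul, mul_inv_cancel₀ (by exact_mod_cast hnv), one_smul]
      have hu' : u = α • x₀ + (‖v‖ : ℂ) • z := by
        rw [hvz', hv]
        abel
      have hpyth : ‖α‖^2 + ‖v‖^2 = 1 := by
        have h3 : (Complex.re ⟪α • x₀, v⟫) = 0 := by
          rw [inner_smul_left, hx₀v, mul_zero, Complex.zero_re]
        have h4 : ‖α • x₀ + v‖^2 = ‖α • x₀‖^2 + 2 * Complex.re ⟪α • x₀, v⟫ + ‖v‖^2 :=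
          norm_add_sq (𝕜 := ℂ) _ _
        have h5 : α • x₀ + v = u := by rw [hv]; abel
        rw [h5, h3, hu, norm_smul, hx₀, mul_one] at h4
        nlinarith [h4]
      have hsum : ∀ b : ℂ, A (b • u) = A ((b*α) • x₀) + A ((b * (‖v‖:ℂ)) • z) := by
        intro b
        rw [hu', smul_add, smul_smul, smul_smul, hadd]
      rw [hsum a, hsum c, inner_add_left, inner_add_right, inner_add_right]
      have hcr1 : ⟪A ((a*α) • x₀), A ((c*(‖v‖:ℂ)) • z)⟫ = 0 := hop _ _ (by
        rw [inner_smul_left, inner_smul_right, hx₀z]; ring)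
      have hcr2 : ⟪A ((a*(‖v‖:ℂ)) • z), A ((c*α) • x₀)⟫ = 0 := hop _ _ (by
        rw [inner_smul_left, inner_smul_right, hzx₀]; ring)
      rw [hcr1, hcr2, hKIx (a*α) (c*α), hKIz z hz1 hzx₀ (a*(‖v‖:ℂ)) (c*(‖v‖:ℂ))]
      have e0 : starRingEnd ℂ α * α = ((‖α‖^2 : ℝ) : ℂ) := by
        rw [mul_comm, Complex.mul_conj, Complex.normSq_eq_norm_sq]
      have e1 : starRingEnd ℂ (a*α) * (c*α) = ((‖α‖^2 : ℝ) : ℂ) * (starRingEnd ℂ a * c) := by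
        rw [map_mul, ← e0]; ring
      have e2 : starRingEnd ℂ (a*(‖v‖:ℂ)) * (c*(‖v‖:ℂ))
          = ((‖v‖^2 : ℝ) : ℂ) * (starRingEnd ℂ a * c) := by
        rw [map_mul, Complex.conj_ofReal]
        push_cast
        ring
      rw [e1, e2, hRmul, hRmul]
      have hsum1 : ((‖α‖^2 : ℝ) : ℂ) + ((‖v‖^2 : ℝ) : ℂ) = 1 := by
        rw [← Complex.ofReal_add, hpyth, Complex.ofReal_one]
      linear_combination (φ (starRingEnd ℂ a * c)) * hsum1
  -- Master formula, step 2
  have hA0 : A 0 = 0 := by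
    have h := hadd 0 0
    rw [add_zero] at h
    exact left_eq_add.mp h
  have hφ0 : φ 0 = 0 := map_zero (AddMonoidHom.mk' φ hphi_add)
  have hM2 : ∀ u v : H, ⟪A u, A v⟫ = φ ⟪u, v⟫ := by
    intro u v
    by_cases hu0 : u = 0
    · rw [hu0, hA0, inner_zero_left, inner_zero_left, hφ0]
    · have hnu : (‖u‖ : ℝ) ≠ 0 := norm_ne_zero_iff.mpr hu0
      set x : H := ((‖u‖ : ℂ))⁻¹ • u with hx
      have hx1 : ‖x‖ = 1 := by
        rw [hx, norm_smul, norm_inv, Complex.norm_real, Real.norm_eq_abs, abs_norm]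
        field_simp
      have hux : ((‖u‖ : ℂ)) • x = u := by
        rw [hx, smul_smul, mul_inv_cancel₀ (by exact_mod_cast hnu), one_smul]
      have hxx' : ⟪x, x⟫ = 1 := by rw [inner_self_eq_norm_sq_to_K, hx1]; norm_num
      set β : ℂ := ⟪x, v⟫ with hβ
      set w : H := v - β • x with hw
      have hxw : ⟪x, w⟫ = 0 := by
        rw [hw, inner_sub_right, inner_smul_right, hxx', mul_one, ← hβ, sub_self]
      have hwx : ⟪w, x⟫ = 0 := by rw [← inner_conj_symm, hxw, map_zero]
      have hβval : ⟪u, v⟫ = (‖u‖ : ℂ) * β := by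
        conv_lhs => rw [← hux]
        rw [inner_smul_left, Complex.conj_ofReal, hβ]
      have hφβ : φ (starRingEnd ℂ ((‖u‖:ℂ)) * β) = φ ((‖u‖:ℂ) * β) := by
        rw [Complex.conj_ofReal]
      by_cases hwz : w = 0
      · rw [hw] at hwz
        have hv' : v = β • x := sub_eq_zero.mp hwz
        conv_lhs => rw [← hux, hv']
        rw [hM1 x hx1 ((‖u‖:ℂ)) β, hφβ, hβval]
      · have hnw : (‖w‖ : ℝ) ≠ 0 := norm_ne_zero_iff.mpr hwz
        set z : H := ((‖w‖ : ℂ))⁻¹ • w with hz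
        have hwz' : ((‖w‖ : ℂ)) • z = w := by
          rw [hz, smul_smul, mul_inv_cancel₀ (by exact_mod_cast hnw), one_smul]
        have hxz' : ⟪x, z⟫ = 0 := by rw [hz, inner_smul_right, hxw, mul_zero]
        have hv' : v = β • x + (‖w‖ : ℂ) • z := by rw [hwz', hw]; abel
        have hcr : ⟪A ((‖u‖:ℂ) • x), A ((‖w‖:ℂ) • z)⟫ = 0 := hop _ _ (by
          rw [inner_smul_left, inner_smul_right, hxz']; ring)
        conv_lhs => rw [← hux, hv', hadd]
        rw [inner_add_right, hcr, add_zero, hM1 x hx1 ((‖u‖:ℂ)) β, hφβ, hβval]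
  -- positivity of γ
  have hγpos : 0 < γ := by
    rcases hγ0.lt_or_eq with h | h
    · exact h
    · exfalso
      apply hA
      have hδ0 : δ = 0 := by
        have hb := hbound Complex.I
        rw [← h, zero_mul] at hb
        have : φ Complex.I = 0 := norm_le_zero_iff.mp hb
        rw [hδdef, this, Complex.zero_im]
      have hφall : ∀ zz : ℂ, φ zz = 0 := by
        intro zz
        rw [hφz, hδ0, ← h]
        simp
      funext u
      have h1 : ((‖A u‖ : ℂ))^2 = φ ⟪u, u⟫ := by
        rw [← hM2 u u, inner_self_eq_norm_sq_to_K]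
        norm_cast
      rw [hφall] at h1
      have h2 : ‖A u‖^2 = 0 := by exact_mod_cast h1
      have h3 : ‖A u‖ = 0 := by nlinarith [norm_nonneg (A u)]
      simpa using norm_eq_zero.mp h3
  -- the density argument
  set d : ℝ := δ / γ with hd
  set W : K := Complex.I • A x₀ - ((d : ℝ) : ℂ) • A (Complex.I • x₀) with hW
  have hAI : ∀ u : H, ⟪A u, A (Complex.I • x₀)⟫ = φ (Complex.I * ⟪u, x₀⟫) := by
    intro u
    have h := hM2 u (Complex.I • x₀)
    rw [inner_smul_right] at h
    exact h
  have hdγ : d * γ = δ := by rw [hd]; field_simp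
  have hre0 : ∀ u : H, (⟪A u, W⟫).re = 0 := by
    intro u
    rw [hW, inner_sub_right, inner_smul_right, inner_smul_right, hAI, hM2]
    set zz : ℂ := ⟪u, x₀⟫
    rw [hφz zz, hφz (Complex.I * zz)]
    simp only [Complex.sub_re, Complex.mul_re, Complex.mul_im, Complex.add_re, Complex.add_im,
      Complex.I_re, Complex.I_im, Complex.ofReal_re, Complex.ofReal_im]
    ring_nf
    linear_combination zz.im * hdγ
  have hWW : W = 0 := by
    have h1 : W ∈ closure (Set.range A) := by
      rw [hdense.closure_range]; trivial
    have hcl : IsClosed {y : K | (⟪y, W⟫).re = 0} := by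
      have hcont2 : Continuous fun y : K => (⟪y, W⟫ : ℂ).re := by
        exact Complex.continuous_re.comp (Continuous.inner continuous_id continuous_const)
      exact isClosed_eq hcont2 continuous_const
    have hsub : Set.range A ⊆ {y : K | (⟪y, W⟫).re = 0} := by
      rintro y ⟨u, rfl⟩
      exact hre0 u
    have h2 : (⟪W, W⟫ : ℂ).re = 0 := closure_minimal hsub hcl h1
    rw [inner_self_eq_norm_sq_to_K] at h2
    have h2' : ‖W‖ ^ 2 = 0 := by exact_mod_cast h2
    have h3 : ‖W‖ = 0 := by nlinarith [norm_nonneg W, h2']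
    exact norm_eq_zero.mp h3
  have hkey : γ * γ = δ * δ := by
    have h2 : ⟪A x₀, W⟫ = 0 := by rw [hWW, inner_zero_right]
    rw [hW, inner_sub_right, inner_smul_right, inner_smul_right, hAI, hM2, hxx, mul_one] at h2
    have hφ1 : φ 1 = (γ : ℂ) := by
      rw [← Complex.ofReal_one, hφreal]
      norm_num
    rw [hφ1, hφI] at h2
    have h3 := congrArg Complex.im h2
    simp only [Complex.sub_im, Complex.mul_im, Complex.mul_re, Complex.I_re, Complex.I_im,
      Complex.ofReal_re, Complex.ofReal_im, Complex.zero_im] at h3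
    -- h3 : γ - d * δ = 0 (up to arrangement)
    have h4 : γ = d * δ := by linarith [h3]
    have h5 : γ * γ = d * δ * γ := by rw [← h4]
    rw [hd] at h5
    field_simp at h5
    linarith [h5]
  refine ⟨γ, hγpos, ?_⟩
  rcases mul_self_eq_mul_self_iff.mp hkey with h | h
  · left
    intro u v
    rw [hM2, hφz, ← h]
    push_cast
    linear_combination (γ : ℂ) * (Complex.re_add_im (⟪u, v⟫ : ℂ))
  · right
    intro u v
    have hδval : δ = -γ := by linarith [h]
    have hconj : ∀ zc : ℂ, (starRingEnd ℂ) zc = ((zc.re : ℝ) : ℂ) - ((zc.im : ℝ) : ℂ) * Complex.I := by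
      intro zc
      apply Complex.ext <;> simp
    rw [hM2, hφz, hδval, ← inner_conj_symm v u, hconj (⟪u, v⟫ : ℂ)]
    push_cast
    ring

lemma rclike_coe (r : ℝ) : (RCLike.ofReal r : ℂ) = Complex.ofReal r := rfl

variable {H K : Type*} [NormedAddCommGroup H] [InnerProductSpace ℂ H]
  [NormedAddCommGroup K] [InnerProductSpace ℂ K]

lemma b_bundle (A : H → K) (γ₁ : ℝ) (hγ : 0 < γ₁)
    (h : (∀ x y : H, ⟪A x, A y⟫ = (γ₁ : ℂ) * ⟪x, y⟫) ∨
         (∀ x y : H, ⟪A x, A y⟫ = (γ₁ : ℂ) * ⟪y, x⟫)) :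
    (∀ x y, A (x + y) = A x + A y) ∧
    ((∀ (l : ℂ) (x : H), A (l • x) = l • A x) ∨
      (∀ (l : ℂ) (x : H), A (l • x) = (starRingEnd ℂ l) • A x)) ∧
    (∀ x : H, ‖A x‖ = Real.sqrt γ₁ * ‖x‖) ∧
    (∀ x y : H, ⟪x, y⟫ = 0 ↔ ⟪A x, A y⟫ = 0) := by
  have hγ₁ : ((γ₁ : ℝ) : ℂ) ≠ 0 := by
    simp only [ne_eq, Complex.ofReal_eq_zero]
    exact hγ.ne'
  have hself : ∀ x : H, ⟪A x, A x⟫ = (γ₁ : ℂ) * ⟪x, x⟫ := by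
    rcases h with h | h
    · exact fun x => h x x
    · exact fun x => h x x
  have hnorm : ∀ x : H, ‖A x‖ = Real.sqrt γ₁ * ‖x‖ := by
    intro x
    have h1 := hself x
    rw [inner_self_eq_norm_sq_to_K, inner_self_eq_norm_sq_to_K, rclike_coe, rclike_coe] at h1
    have h2 : ‖A x‖^2 = γ₁ * ‖x‖^2 := by exact_mod_cast h1
    have h3 : ‖A x‖ = Real.sqrt (γ₁ * ‖x‖^2) := by
      rw [← h2, Real.sqrt_sq (norm_nonneg _)]
    rw [h3, Real.sqrt_mul hγ.le, Real.sqrt_sq (norm_nonneg _)]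
  refine ⟨?_, ?_, hnorm, ?_⟩
  · -- additivity
    intro x y
    have hz : ⟪A (x + y) - A x - A y, A (x + y) - A x - A y⟫ = 0 := by
      rcases h with h | h <;>
      · simp only [inner_sub_left, inner_sub_right, h, inner_add_left, inner_add_right]
        ring
    have h4 := inner_self_eq_zero.mp hz
    rw [sub_sub, sub_eq_zero] at h4
    exact h4
  · -- homogeneity
    rcases h with h | h
    · left
      intro l x
      have hz : ⟪A (l • x) - l • A x, A (l • x) - l • A x⟫ = 0 := by
        simp only [inner_sub_left, inner_sub_right, inner_smul_left, inner_smul_right, h]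
        ring
      have h4 := inner_self_eq_zero.mp hz
      rwa [sub_eq_zero] at h4
    · right
      intro l x
      have hz : ⟪A (l • x) - (starRingEnd ℂ l) • A x,
          A (l • x) - (starRingEnd ℂ l) • A x⟫ = 0 := by
        simp only [inner_sub_left, inner_sub_right, inner_smul_left, inner_smul_right, h,
          Complex.conj_conj]
        ring
      have h4 := inner_self_eq_zero.mp hz
      rwa [sub_eq_zero] at h4
  · -- orthogonality in both directions
    intro x y
    rcases h with h | h
    · rw [h]
      constructor
      · intro h5; rw [h5, mul_zero]
      · intro h5
        exact (mul_eq_zero.mp h5).resolve_left hγ₁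
    · rw [h]
      have hcs : (⟪x, y⟫ : ℂ) = 0 ↔ (⟪y, x⟫ : ℂ) = 0 := by
        constructor
        · intro h5; rw [← inner_conj_symm, h5, map_zero]
        · intro h5; rw [← inner_conj_symm, h5, map_zero]
      rw [hcs]
      constructor
      · intro h5; rw [h5, mul_zero]
      · intro h5
        exact (mul_eq_zero.mp h5).resolve_left hγ₁

lemma a_to_op (A : H → K) (hadd : ∀ x y, A (x + y) = A x + A y)
    (hhom : (∀ (l : ℂ) (x : H), A (l • x) = l • A x) ∨
      (∀ (l : ℂ) (x : H), A (l • x) = (starRingEnd ℂ l) • A x))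
    (γ : ℝ) (hn : ∀ x, ‖A x‖ = γ * ‖x‖) :
    ∀ x y : H, ⟪x, y⟫ = 0 → ⟪A x, A y⟫ = 0 := by
  intro x y hxy
  have hmu : ∀ μ : ℂ, A (x + μ • y) = A x + μ • A y ∨ A (x + μ • y) = A x + (starRingEnd ℂ μ) • A y := by
    intro μ
    rcases hhom with h | h
    · left; rw [hadd, h]
    · right; rw [hadd, h]
  have hre : ∀ μ : ℂ, Complex.re ⟪A x, A (μ • y)⟫ = 0 := by
    intro μ
    have h2 : ‖x + μ • y‖^2 = ‖x‖^2 + ‖μ • y‖^2 := by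
      have h3 := norm_add_sq (𝕜 := ℂ) x (μ • y)
      rw [inner_smul_right, hxy, mul_zero, map_zero] at h3
      linarith
    have h4 : ‖A (x + μ • y)‖^2 = ‖A x‖^2 + ‖A (μ • y)‖^2 := by
      rw [hn, hn, hn, mul_pow, mul_pow, mul_pow, h2]
      ring
    have h5 := norm_add_sq (𝕜 := ℂ) (A x) (A (μ • y))
    have h6 : A (x + μ • y) = A x + A (μ • y) := hadd x (μ • y)
    rw [h6] at h4
    rw [h4] at h5
    simp only [RCLike.re_to_complex] at h5
    linarith
  have hre1 : Complex.re ⟪A x, A y⟫ = 0 := by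
    have := hre 1
    rwa [one_smul] at this
  have him1 : Complex.im ⟪A x, A y⟫ = 0 := by
    have h7 := hre Complex.I
    rcases hhom with h | h
    · rw [h, inner_smul_right] at h7
      simp only [Complex.mul_re, Complex.I_re, Complex.I_im] at h7
      linarith
    · rw [h, inner_smul_right, Complex.conj_I] at h7
      simp only [Complex.neg_re, Complex.neg_im, Complex.mul_re, Complex.I_re, Complex.I_im] at h7
      linarith
  apply Complex.ext
  · rw [hre1, Complex.zero_re]
  · rw [him1, Complex.zero_im]

end LiLiuPeraltaAux

/-- Theorem 2.1 of Li–Liu–Peralta: for a non-zero map `A : H → K` with norm-dense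
image between complex inner product spaces (`dim H ≥ 2`), the statements
(a) `A` is a positive scalar multiple of a complex-linear or conjugate-linear
isometry; (b) `⟪A x, A y⟫ = γ₁ ⟪x, y⟫` for all `x, y` or `⟪A x, A y⟫ = γ₁ ⟪y, x⟫`
for all `x, y`, for some `γ₁ > 0`; (c) `A` is complex-linear or conjugate-linear
and preserves orthogonality in both directions; (d) `A` is complex-linear or
conjugate-linear and preserves orthogonality; (e) `A` is additive and preserves
orthogonality in both directions; (f) `A` is additive and preserves orthogonality —
are all equivalent. -/
theorem denseRange_characterization_op
    {H K : Type*} [NormedAddCommGroup H] [InnerProductSpace ℂ H]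
    [NormedAddCommGroup K] [InnerProductSpace ℂ K]
    (hdim : 2 ≤ Module.rank ℂ H)
    (A : H → K) (hA : A ≠ 0) (hdense : DenseRange A) :
    -- (a) ↔ (b)
    ((((∀ x y, A (x + y) = A x + A y) ∧
        ((∀ (l : ℂ) (x : H), A (l • x) = l • A x) ∨
          (∀ (l : ℂ) (x : H), A (l • x) = (starRingEnd ℂ l) • A x))) ∧
       ∃ γ : ℝ, 0 < γ ∧ ∀ x, ‖A x‖ = γ * ‖x‖) ↔
      (∃ γ₁ : ℝ, 0 < γ₁ ∧
        ((∀ x y : H, ⟪A x, A y⟫ = (γ₁ : ℂ) * ⟪x, y⟫) ∨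
         (∀ x y : H, ⟪A x, A y⟫ = (γ₁ : ℂ) * ⟪y, x⟫)))) ∧
    -- (b) ↔ (c)
    ((∃ γ₁ : ℝ, 0 < γ₁ ∧
        ((∀ x y : H, ⟪A x, A y⟫ = (γ₁ : ℂ) * ⟪x, y⟫) ∨
         (∀ x y : H, ⟪A x, A y⟫ = (γ₁ : ℂ) * ⟪y, x⟫))) ↔
      (((∀ x y, A (x + y) = A x + A y) ∧
        ((∀ (l : ℂ) (x : H), A (l • x) = l • A x) ∨
          (∀ (l : ℂ) (x : H), A (l • x) = (starRingEnd ℂ l) • A x))) ∧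
       ∀ x y : H, ⟪x, y⟫ = 0 ↔ ⟪A x, A y⟫ = 0)) ∧
    -- (c) ↔ (d)
    ((((∀ x y, A (x + y) = A x + A y) ∧
        ((∀ (l : ℂ) (x : H), A (l • x) = l • A x) ∨
          (∀ (l : ℂ) (x : H), A (l • x) = (starRingEnd ℂ l) • A x))) ∧
       ∀ x y : H, ⟪x, y⟫ = 0 ↔ ⟪A x, A y⟫ = 0) ↔
      (((∀ x y, A (x + y) = A x + A y) ∧
        ((∀ (l : ℂ) (x : H), A (l • x) = l • A x) ∨
          (∀ (l : ℂ) (x : H), A (l • x) = (starRingEnd ℂ l) • A x))) ∧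
       ∀ x y : H, ⟪x, y⟫ = 0 → ⟪A x, A y⟫ = 0)) ∧
    -- (d) ↔ (e)
    ((((∀ x y, A (x + y) = A x + A y) ∧
        ((∀ (l : ℂ) (x : H), A (l • x) = l • A x) ∨
          (∀ (l : ℂ) (x : H), A (l • x) = (starRingEnd ℂ l) • A x))) ∧
       ∀ x y : H, ⟪x, y⟫ = 0 → ⟪A x, A y⟫ = 0) ↔
      ((∀ x y, A (x + y) = A x + A y) ∧
       ∀ x y : H, ⟪x, y⟫ = 0 ↔ ⟪A x, A y⟫ = 0)) ∧
    -- (e) ↔ (f)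
    (((∀ x y, A (x + y) = A x + A y) ∧
       ∀ x y : H, ⟪x, y⟫ = 0 ↔ ⟪A x, A y⟫ = 0) ↔
      ((∀ x y, A (x + y) = A x + A y) ∧
       ∀ x y : H, ⟪x, y⟫ = 0 → ⟪A x, A y⟫ = 0)) := by
  -- main proof assembly
  have hfb : (∀ x y, A (x + y) = A x + A y) →
      (∀ x y : H, ⟪x, y⟫ = 0 → ⟪A x, A y⟫ = 0) →
      ∃ γ₁ : ℝ, 0 < γ₁ ∧
        ((∀ x y : H, ⟪A x, A y⟫ = (γ₁ : ℂ) * ⟪x, y⟫) ∨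
         (∀ x y : H, ⟪A x, A y⟫ = (γ₁ : ℂ) * ⟪y, x⟫)) :=
    fun h1 h2 => LiLiuPeraltaAux.ftob hdim A hA hdense h1 h2
  have hb : ∀ γ₁ : ℝ, 0 < γ₁ →
      ((∀ x y : H, ⟪A x, A y⟫ = (γ₁ : ℂ) * ⟪x, y⟫) ∨
       (∀ x y : H, ⟪A x, A y⟫ = (γ₁ : ℂ) * ⟪y, x⟫)) →
      (∀ x y, A (x + y) = A x + A y) ∧
      ((∀ (l : ℂ) (x : H), A (l • x) = l • A x) ∨
        (∀ (l : ℂ) (x : H), A (l • x) = (starRingEnd ℂ l) • A x)) ∧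
      (∀ x : H, ‖A x‖ = Real.sqrt γ₁ * ‖x‖) ∧
      (∀ x y : H, ⟪x, y⟫ = 0 ↔ ⟪A x, A y⟫ = 0) :=
    fun γ₁ h1 h2 => LiLiuPeraltaAux.b_bundle A γ₁ h1 h2
  refine ⟨?_, ?_, ?_, ?_, ?_⟩
  · constructor
    · rintro ⟨⟨hadd, hhom⟩, γ, hγ, hn⟩
      exact hfb hadd (LiLiuPeraltaAux.a_to_op A hadd hhom γ hn)
    · rintro ⟨γ₁, hγ₁, hor⟩
      obtain ⟨h1, h2, h3, h4⟩ := hb γ₁ hγ₁ hor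
      exact ⟨⟨h1, h2⟩, Real.sqrt γ₁, Real.sqrt_pos.mpr hγ₁, h3⟩
  · constructor
    · rintro ⟨γ₁, hγ₁, hor⟩
      obtain ⟨h1, h2, h3, h4⟩ := hb γ₁ hγ₁ hor
      exact ⟨⟨h1, h2⟩, h4⟩
    · rintro ⟨⟨hadd, hhom⟩, hiff⟩
      exact hfb hadd (fun x y h => (hiff x y).mp h)
  · constructor
    · rintro ⟨hh, hiff⟩
      exact ⟨hh, fun x y h => (hiff x y).mp h⟩
    · rintro ⟨⟨hadd, hhom⟩, hone⟩
      obtain ⟨γ₁, hγ₁, hor⟩ := hfb hadd hone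
      obtain ⟨h1, h2, h3, h4⟩ := hb γ₁ hγ₁ hor
      exact ⟨⟨hadd, hhom⟩, h4⟩
  · constructor
    · rintro ⟨⟨hadd, hhom⟩, hone⟩
      obtain ⟨γ₁, hγ₁, hor⟩ := hfb hadd hone
      obtain ⟨h1, h2, h3, h4⟩ := hb γ₁ hγ₁ hor
      exact ⟨hadd, h4⟩
    · rintro ⟨hadd, hiff⟩
      obtain ⟨γ₁, hγ₁, hor⟩ := hfb hadd (fun x y h => (hiff x y).mp h)
      obtain ⟨h1, h2, h3, h4⟩ := hb γ₁ hγ₁ hor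
      exact ⟨⟨hadd, h2⟩, fun x y h => (hiff x y).mp h⟩
  · constructor
    · rintro ⟨hadd, hiff⟩
      exact ⟨hadd, fun x y h => (hiff x y).mp h⟩
    · rintro ⟨hadd, hone⟩
      obtain ⟨γ₁, hγ₁, hor⟩ := hfb hadd hone
      obtain ⟨h1, h2, h3, h4⟩ := hb γ₁ hγ₁ hor
      exact ⟨hadd, h4⟩
end
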